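/- arXiv:1306.6145 — 3 statements merged into one kernel-verified Lean document; each statement's English description precedes it below -/
import Mathlib

section
/- Let 0 < ε and ω satisfy ε ≤ ω ≤ 2/ρ(A)² − ε, where ρ(A) is the spectral norm of A ∈ ℝ^{m×n}. Define T := I − ω AᵀA and R := ω Aᵀ. Then T + RA = I, range(R) ⊆ range(Aᵀ), and ‖T P_{range(Aᵀ)}‖ < 1. -/
open Matrix

/-- The continuous linear map on Euclidean spaces induced by a matrix. -/
noncomputable def mulE {m n : ℕ} (A : Matrix (Fin m) (Fin n) ℝ) :
    EuclideanSpace ℝ (Fin n) →L[ℝ] EuclideanSpace ℝ (Fin m) :=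
  LinearMap.toContinuousLinearMap (Matrix.toEuclideanLin A)

/-- The orthogonal projection of the ambient space onto a subspace, as a map of the
ambient space. -/
noncomputable def projCLM {n : ℕ} (V : Submodule ℝ (EuclideanSpace ℝ (Fin n))) :
    EuclideanSpace ℝ (Fin n) →L[ℝ] EuclideanSpace ℝ (Fin n) :=
  V.subtypeL.comp (Submodule.orthogonalProjection V)

set_option maxHeartbeats 1000000 in
lemma mulE_transpose {m n : ℕ} (A : Matrix (Fin m) (Fin n) ℝ) :
    mulE Aᵀ = ContinuousLinearMap.adjoint (mulE A) := by
  rw [mulE, mulE, ← A.conjTranspose_eq_transpose_of_trivial,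
    Matrix.toEuclideanLin_conjTranspose_eq_adjoint,
    LinearMap.adjoint_toContinuousLinearMap]

lemma mulE_T_apply {m n : ℕ} (A : Matrix (Fin m) (Fin n) ℝ) (ω : ℝ)
    (x : EuclideanSpace ℝ (Fin n)) :
    mulE (1 - ω • (Aᵀ * A)) x = x - ω • (mulE Aᵀ) ((mulE A) x) := by
  simp [mulE, map_sub, _root_.map_smul, Matrix.toEuclideanLin_apply, Matrix.mulVec_mulVec]

set_option maxHeartbeats 1000000 in
/-- For the Landweber matrices `T = I − ω AᵀA`, `R = ω Aᵀ` with
`0 < ε ≤ ω ≤ 2/ρ(A)² − ε` (ρ(A) the spectral norm of `A`, assumed positive), the three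
properties `T + RA = I`, `range R ⊆ range Aᵀ` and `‖T P_{range Aᵀ}‖ < 1` hold. -/
theorem landweber_matrices_satisfy_properties (m n : ℕ)
    (A : Matrix (Fin m) (Fin n) ℝ)
    (hA : 0 < ‖mulE A‖)
    (ε ω : ℝ) (hε : 0 < ε)
    (hω1 : ε ≤ ω) (hω2 : ω ≤ 2 / ‖mulE A‖ ^ 2 - ε)
    (T : Matrix (Fin n) (Fin n) ℝ) (hT : T = 1 - ω • (Aᵀ * A))
    (R : Matrix (Fin n) (Fin m) ℝ) (hR : R = ω • Aᵀ) :
    T + R * A = 1 ∧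
    (∀ y : EuclideanSpace ℝ (Fin m),
      mulE R y ∈ LinearMap.range (Matrix.toEuclideanLin Aᵀ)) ∧
    ‖(mulE T).comp (projCLM (LinearMap.range (Matrix.toEuclideanLin Aᵀ)))‖ < 1 := by
  set S := mulE A with hS
  set ρ := ‖mulE A‖ with hρ
  clear_value ρ
  have hω0 : 0 < ω := lt_of_lt_of_le hε hω1
  have hρ2 : 0 < ρ ^ 2 := by positivity
  have hωρ : ω * ρ ^ 2 ≤ 2 - ε * ρ ^ 2 := by
    have h := mul_le_mul_of_nonneg_right (by linarith : ω + ε ≤ 2 / ρ ^ 2) (le_of_lt hρ2)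
    rw [div_mul_cancel₀ _ (ne_of_gt hρ2)] at h
    nlinarith
  refine ⟨?_, ?_, ?_⟩
  · rw [hT, hR, Matrix.smul_mul]; abel
  · intro y
    rw [hR]
    have : mulE (ω • Aᵀ) y = ω • (Matrix.toEuclideanLin Aᵀ) y := by
      simp [mulE, _root_.map_smul]
    rw [this]
    exact Submodule.smul_mem _ _ ⟨y, rfl⟩
  · -- the operator norm bound
    set K : Submodule ℝ (EuclideanSpace ℝ (Fin n)) := LinearMap.ker (S : EuclideanSpace ℝ (Fin n) →ₗ[ℝ] EuclideanSpace ℝ (Fin m)) with hK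
    set Vr : Submodule ℝ (EuclideanSpace ℝ (Fin n)) :=
      LinearMap.range (Matrix.toEuclideanLin Aᵀ) with hVr
    have hsub : Vr ≤ Kᗮ := by
      rintro x ⟨y, rfl⟩
      rw [Submodule.mem_orthogonal]
      intro u hu
      have hx : (Matrix.toEuclideanLin Aᵀ) y = mulE Aᵀ y := rfl
      rw [hx, mulE_transpose, real_inner_comm,
        ContinuousLinearMap.adjoint_inner_left]
      have : S u = 0 := hu
      rw [this, inner_zero_right]
    -- antilipschitz constant on Kᗮ
    have hker : LinearMap.ker ((S : EuclideanSpace ℝ (Fin n) →ₗ[ℝ]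
        EuclideanSpace ℝ (Fin m)).comp Kᗮ.subtype) = ⊥ := by
      rw [LinearMap.ker_eq_bot']
      rintro ⟨v, hv⟩ hgv
      have hvK : v ∈ K := by
        simpa [hK, LinearMap.mem_ker] using hgv
      have : v = 0 := by
        have := (Submodule.orthogonal_disjoint K).le_bot ⟨hvK, hv⟩
        simpa using this
      simpa using this
    obtain ⟨c, hc0, hcl⟩ := LinearMap.exists_antilipschitzWith _ hker
    have hlow : ∀ x ∈ Kᗮ, ‖x‖ ≤ (c : ℝ) * ‖S x‖ := by
      intro x hx
      have := hcl.le_mul_dist (⟨x, hx⟩ : Kᗮ) 0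
      simpa [dist_eq_norm, Submodule.coe_norm] using this
    have hcinv : 0 < (c : ℝ)⁻¹ := by positivity
    set ci : ℝ := (c : ℝ)⁻¹ with hci
    have hlow' : ∀ x ∈ Kᗮ, ci * ‖x‖ ≤ ‖S x‖ := by
      intro x hx
      rw [hci, inv_mul_le_iff₀ (by positivity)]
      exact hlow x hx
    have h2ρ : 0 < 2 - ω * ρ ^ 2 := by have := mul_pos hε hρ2; linarith
    set δ : ℝ := ω * (2 - ω * ρ ^ 2) * ci ^ 2 with hδ
    clear_value δ
    have hδ0 : 0 < δ := by
      rw [hδ]; positivity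
    clear hcl hlow hker
    have hnadj : ‖ContinuousLinearMap.adjoint S‖ = ρ := by
      rw [hρ]; exact ContinuousLinearMap.adjoint.norm_map S
    -- key estimate
    have key : ∀ x ∈ Kᗮ, ‖mulE T x‖ ^ 2 ≤ (1 - δ) * ‖x‖ ^ 2 := by
      intro x hx
      have hTx : mulE T x = x - ω • (ContinuousLinearMap.adjoint S) (S x) := by
        rw [hT, mulE_T_apply, mulE_transpose]
      set u := (ContinuousLinearMap.adjoint S) (S x) with hu
      have h1 : ‖mulE T x‖ ^ 2 =
          ‖x‖ ^ 2 - 2 * inner ℝ x (ω • u) + ‖ω • u‖ ^ 2 := by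
        rw [hTx]; exact norm_sub_sq_real x (ω • u)
      have h2 : (inner ℝ x (ω • u) : ℝ) = ω * ‖S x‖ ^ 2 := by
        rw [real_inner_smul_right, hu, ContinuousLinearMap.adjoint_inner_right,
          real_inner_self_eq_norm_sq]
      have h3 : ‖u‖ ≤ ρ * ‖S x‖ := by
        calc ‖u‖ ≤ ‖ContinuousLinearMap.adjoint S‖ * ‖S x‖ :=
              ContinuousLinearMap.le_opNorm _ _
          _ = ρ * ‖S x‖ := by rw [hnadj]
      have h3' : ‖ω • u‖ ^ 2 ≤ ω ^ 2 * (ρ * ‖S x‖) ^ 2 := by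
        rw [norm_smul]
        have h4 : ‖u‖ ^ 2 ≤ (ρ * ‖S x‖) ^ 2 :=
          pow_le_pow_left₀ (norm_nonneg _) h3 2
        have : ‖(ω : ℝ)‖ = ω := abs_of_pos hω0
        rw [mul_pow, this]
        exact mul_le_mul_of_nonneg_left h4 (sq_nonneg ω)
      have h5 : ci * ‖x‖ ≤ ‖S x‖ := hlow' x hx
      have h6 : 0 ≤ ‖S x‖ := norm_nonneg _
      have h7 : 0 ≤ ci * ‖x‖ := by positivity
      have h8 : (ci * ‖x‖) ^ 2 ≤ ‖S x‖ ^ 2 := pow_le_pow_left₀ h7 h5 2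
      rw [h1, h2, hδ]
      have h10 : ω * (2 - ω * ρ ^ 2) * ((ci * ‖x‖) ^ 2) ≤ ω * (2 - ω * ρ ^ 2) * ‖S x‖ ^ 2 :=
        mul_le_mul_of_nonneg_left h8 (by positivity)
      nlinarith [h10, h3']
    -- 1 - δ ≥ 0
    have hKne : Kᗮ ≠ ⊥ := by
      rw [Ne, Submodule.orthogonal_eq_bot_iff]
      intro hKtop
      have hS0 : S = 0 := by
        ext x i
        have hx : x ∈ K := hKtop ▸ Submodule.mem_top
        rw [hK, LinearMap.mem_ker] at hx
        rw [show S x = 0 from hx]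
        rfl
      rw [hρ, ← hS, hS0] at hA
      simp at hA
    obtain ⟨x₀, hx₀V, hx₀⟩ := Submodule.exists_mem_ne_zero_of_ne_bot hKne
    have h1δ : 0 ≤ 1 - δ := by
      have hk := key x₀ hx₀V
      have hx₀n : 0 < ‖x₀‖ ^ 2 := by
        have := norm_pos_iff.mpr hx₀
        positivity
      nlinarith [sq_nonneg ‖mulE T x₀‖]
    have hKc1 : Real.sqrt (1 - δ) < 1 := by
      have h := Real.sqrt_lt_sqrt h1δ (show 1 - δ < 1 by linarith)
      simpa using h
    have hKc0 : 0 ≤ Real.sqrt (1 - δ) := Real.sqrt_nonneg _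
    have hbd : ∀ z ∈ Kᗮ, ‖mulE T z‖ ≤ Real.sqrt (1 - δ) * ‖z‖ := by
      intro z hz
      have hkz := key z hz
      have h := Real.sqrt_le_sqrt hkz
      rw [Real.sqrt_mul h1δ, Real.sqrt_sq (norm_nonneg z)] at h
      rwa [Real.sqrt_sq (norm_nonneg _)] at h
    refine lt_of_le_of_lt (ContinuousLinearMap.opNorm_le_bound _ hKc0 fun y => ?_) hKc1
    have hmem : projCLM Vr y ∈ Kᗮ := hsub (by simp [projCLM])
    calc ‖((mulE T).comp (projCLM Vr)) y‖ = ‖mulE T (projCLM Vr y)‖ := rfl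
      _ ≤ Real.sqrt (1 - δ) * ‖projCLM Vr y‖ := hbd _ hmem
      _ ≤ Real.sqrt (1 - δ) * ‖y‖ := by
          apply mul_le_mul_of_nonneg_left _ hKc0
          have : ‖projCLM Vr y‖ = ‖Submodule.orthogonalProjection Vr y‖ := rfl
          rw [this]
          calc ‖Submodule.orthogonalProjection Vr y‖
              ≤ ‖(Submodule.orthogonalProjection Vr : EuclideanSpace ℝ (Fin n) →L[ℝ] Vr)‖ * ‖y‖ :=
                ContinuousLinearMap.le_opNorm _ _
            _ ≤ 1 * ‖y‖ := mul_le_mul_of_nonneg_right (Submodule.orthogonalProjection_norm_le Vr) (norm_nonneg _)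
            _ = ‖y‖ := one_mul _
end

section
/- Under the hypotheses T + RA = I, range(R) ⊆ range(Aᵀ), ‖T̃‖ < 1 (T̃ = T P_{range(Aᵀ)}), and with Δ = (I − T̃)⁻¹ R P_{null(Aᵀ)}(b): every fixed point x of Q(x) = Tx + Rb satisfies P_{range(Aᵀ)}(x) = (I − T̃)⁻¹ R b = x_{LS} + Δ, where x_{LS} is the minimal-norm least squares solution of Ax = b. -/
open Matrix RealInnerProductSpace

lemma mulE_coe {m n : ℕ} (A : Matrix (Fin m) (Fin n) ℝ) (v : EuclideanSpace ℝ (Fin n)) :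
    mulE A v = Matrix.toEuclideanLin A v := by
  simp [mulE]

lemma mulE_mul {m n k : ℕ} (M : Matrix (Fin m) (Fin n) ℝ) (N : Matrix (Fin n) (Fin k) ℝ)
    (v : EuclideanSpace ℝ (Fin k)) : mulE (M * N) v = mulE M (mulE N v) := by
  simp [mulE, Matrix.toEuclideanLin_apply, mulVec_mulVec]

lemma mulE_add {m n : ℕ} (M N : Matrix (Fin m) (Fin n) ℝ)
    (v : EuclideanSpace ℝ (Fin n)) : mulE (M + N) v = mulE M v + mulE N v := by
  simp [mulE, map_add]

lemma mulE_one {n : ℕ} (v : EuclideanSpace ℝ (Fin n)) :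
    mulE (1 : Matrix (Fin n) (Fin n) ℝ) v = v := by
  simp [mulE, Matrix.toEuclideanLin_apply, one_mulVec]

lemma mulE_adj {m n : ℕ} (A : Matrix (Fin m) (Fin n) ℝ)
    (x : EuclideanSpace ℝ (Fin n)) (y : EuclideanSpace ℝ (Fin m)) :
    ⟪mulE Aᵀ y, x⟫ = ⟪y, mulE A x⟫ := by
  have h : (Aᵀ : Matrix (Fin n) (Fin m) ℝ) = Aᴴ :=
    (Matrix.conjTranspose_eq_transpose_of_trivial A).symm
  rw [mulE_coe, mulE_coe, h, Matrix.toEuclideanLin_conjTranspose_eq_adjoint]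
  exact LinearMap.adjoint_inner_left _ x y

lemma projCLM_apply {n : ℕ} (V : Submodule ℝ (EuclideanSpace ℝ (Fin n)))
    (v : EuclideanSpace ℝ (Fin n)) : projCLM V v = (Submodule.orthogonalProjection V v : _) := rfl

lemma projCLM_mem {n : ℕ} (V : Submodule ℝ (EuclideanSpace ℝ (Fin n)))
    (v : EuclideanSpace ℝ (Fin n)) : projCLM V v ∈ V := (Submodule.orthogonalProjection V v).2

lemma projCLM_of_mem {n : ℕ} {V : Submodule ℝ (EuclideanSpace ℝ (Fin n))}
    {v : EuclideanSpace ℝ (Fin n)} (h : v ∈ V) : projCLM V v = v :=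
  Submodule.starProjection_eq_self_iff.2 h

lemma inv_oneSub_apply {n : ℕ} (Ttil : EuclideanSpace ℝ (Fin n) →L[ℝ] EuclideanSpace ℝ (Fin n))
    (h3 : ‖Ttil‖ < 1) (u c : EuclideanSpace ℝ (Fin n)) (h : u - Ttil u = c) :
    Ring.inverse (1 - Ttil) c = u := by
  have hu : IsUnit (1 - Ttil) := ⟨Units.oneSub Ttil h3, rfl⟩
  have hc : (1 - Ttil) u = c := by
    rw [← h]; simp [ContinuousLinearMap.sub_apply]
  rw [← hc, ← ContinuousLinearMap.mul_apply, Ring.inverse_mul_cancel _ hu,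
    ContinuousLinearMap.one_apply]

set_option maxHeartbeats 2000000

/-- Under `T + RA = I`, `range R ⊆ range Aᵀ`, `‖T̃‖ < 1`, with
`Δ = (I − T̃)⁻¹ R P_{null Aᵀ}(b)`: every fixed point `x` of `Q(x) = Tx + Rb` satisfies
`P_{range Aᵀ}(x) = (I − T̃)⁻¹ R b = x_LS + Δ`, where `x_LS` is the minimal-norm least
squares solution. -/
theorem fixed_point_projection (m n : ℕ)
    (A : Matrix (Fin m) (Fin n) ℝ) (b : EuclideanSpace ℝ (Fin m))
    (T : Matrix (Fin n) (Fin n) ℝ)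
    (R : Matrix (Fin n) (Fin m) ℝ)
    (h1 : T + R * A = 1)
    (h2 : ∀ y : EuclideanSpace ℝ (Fin m),
      mulE R y ∈ LinearMap.range (Matrix.toEuclideanLin Aᵀ))
    (Ttil : EuclideanSpace ℝ (Fin n) →L[ℝ] EuclideanSpace ℝ (Fin n))
    (hTtil : Ttil = (mulE T).comp (projCLM (LinearMap.range (Matrix.toEuclideanLin Aᵀ))))
    (h3 : ‖Ttil‖ < 1)
    (LSS : Set (EuclideanSpace ℝ (Fin n)))
    (hLSS : LSS = {x | ∀ z, ‖mulE A x - b‖ ≤ ‖mulE A z - b‖})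
    (xLS : EuclideanSpace ℝ (Fin n))
    (hxLS : xLS ∈ LSS ∧ ∀ z ∈ LSS, ‖xLS‖ ≤ ‖z‖)
    (Δ : EuclideanSpace ℝ (Fin n))
    (hΔ : Δ = Ring.inverse (1 - Ttil)
      (mulE R (projCLM (LinearMap.ker (Matrix.toEuclideanLin Aᵀ)) b))) :
    ∀ x : EuclideanSpace ℝ (Fin n), mulE T x + mulE R b = x →
      projCLM (LinearMap.range (Matrix.toEuclideanLin Aᵀ)) x =
        Ring.inverse (1 - Ttil) (mulE R b) ∧
      Ring.inverse (1 - Ttil) (mulE R b) = xLS + Δ := by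
  intro x hx
  set V : Submodule ℝ (EuclideanSpace ℝ (Fin n)) :=
    LinearMap.range (Matrix.toEuclideanLin Aᵀ) with hV
  -- (F0) T + RA acts as identity
  have hone : ∀ v : EuclideanSpace ℝ (Fin n), mulE T v + mulE R (mulE A v) = v := by
    intro v
    have := congrArg (fun M => mulE M v) h1
    simpa [mulE_add, mulE_mul, mulE_one] using this
  -- (F1) A kills the orthogonal complement of V
  have hF1 : ∀ w ∈ Vᗮ, mulE A w = 0 := by
    intro w hw
    have hz : ⟪mulE A w, mulE A w⟫ = 0 := by
      rw [← mulE_adj]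
      exact (Submodule.mem_orthogonal V w).1 hw _ (by rw [mulE_coe]; exact ⟨mulE A w, rfl⟩)
    exact inner_self_eq_zero.1 hz
  -- Part 1
  have hpart1 : projCLM V x = Ring.inverse (1 - Ttil) (mulE R b) := by
    have hwmem : x - projCLM V x ∈ Vᗮ := Submodule.sub_starProjection_mem_orthogonal x
    have hAw : mulE A (x - projCLM V x) = 0 := hF1 _ hwmem
    have hTw : mulE T (x - projCLM V x) = x - projCLM V x := by
      have := hone (x - projCLM V x)
      rwa [hAw, map_zero, add_zero] at this
    have hTx : mulE T x = mulE T (projCLM V x) + (x - projCLM V x) := by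
      rw [← hTw, ← map_add]
      congr 1
      abel
    have hRb : mulE R b = x - mulE T x := eq_sub_of_add_eq' hx
    have hkey : projCLM V x - Ttil (projCLM V x) = mulE R b := by
      have hTtilu : Ttil (projCLM V x) = mulE T (projCLM V x) := by
        rw [hTtil]
        show mulE T (projCLM V (projCLM V x)) = _
        rw [projCLM_of_mem (projCLM_mem V x)]
      rw [hTtilu, hRb, hTx]
      abel
    exact (inv_oneSub_apply Ttil h3 _ _ hkey).symm
  refine ⟨hpart1, ?_⟩
  -- Part 2
  have horth : ∀ z : EuclideanSpace ℝ (Fin n), ⟪b - mulE A xLS, mulE A z⟫ = 0 := by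
    intro z
    set c : EuclideanSpace ℝ (Fin m) := mulE A xLS - b with hc
    set d : EuclideanSpace ℝ (Fin m) := mulE A z with hd
    have hq : ∀ t : ℝ, 0 ≤ 2 * t * ⟪c, d⟫ + t ^ 2 * ‖d‖ ^ 2 := by
      intro t
      have h0 : ‖c‖ ≤ ‖c + t • d‖ := by
        have h1' := (hLSS ▸ hxLS.1) (xLS + t • z)
        have h2' : mulE A (xLS + t • z) - b = c + t • d := by
          rw [map_add, _root_.map_smul, hc, hd]
          abel
        rw [h2'] at h1'
        exact h1'
      have h3' : ‖c + t • d‖ ^ 2 = ‖c‖ ^ 2 + 2 * t * ⟪c, d⟫ + t ^ 2 * ‖d‖ ^ 2 := by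
        rw [norm_add_sq_real, real_inner_smul_right, norm_smul]
        simp [mul_pow]
        ring
      nlinarith [norm_nonneg c, norm_nonneg (c + t • d)]
    have hcd : ⟪c, d⟫ = 0 := by
      by_cases hd0 : d = 0
      · rw [hd0, inner_zero_right]
      · have hdn : ‖d‖ ≠ 0 := norm_ne_zero_iff.2 hd0
        have hβ : (0:ℝ) < ‖d‖ ^ 2 := by positivity
        have h9 := hq (-⟪c, d⟫ / ‖d‖ ^ 2)
        have h10 : 2 * (-⟪c, d⟫ / ‖d‖ ^ 2) * ⟪c, d⟫ + (-⟪c, d⟫ / ‖d‖ ^ 2) ^ 2 * ‖d‖ ^ 2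
            = -(⟪c, d⟫ ^ 2) / ‖d‖ ^ 2 := by
          field_simp
          ring
        rw [h10] at h9
        have h11 := (le_div_iff₀ hβ).1 h9
        nlinarith [sq_nonneg ⟪c, d⟫]
    have hbc : b - mulE A xLS = -c := by rw [hc]; abel
    rw [hbc, hd, inner_neg_left, hcd, neg_zero]
  -- xLS lies in V
  have hxLSV : xLS ∈ V := by
    have hw0 : xLS - projCLM V xLS ∈ Vᗮ := Submodule.sub_starProjection_mem_orthogonal xLS
    have hAu0 : mulE A (projCLM V xLS) = mulE A xLS := by
      have h0 := hF1 _ hw0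
      rw [map_sub, sub_eq_zero] at h0
      exact h0.symm
    have hu0LSS : projCLM V xLS ∈ LSS := by
      rw [hLSS]
      intro z
      rw [hAu0]
      exact (hLSS ▸ hxLS.1) z
    have hle : ‖xLS‖ ≤ ‖projCLM V xLS‖ := hxLS.2 _ hu0LSS
    have hiz : ⟪projCLM V xLS, xLS - projCLM V xLS⟫ = 0 :=
      Submodule.inner_right_of_mem_orthogonal (projCLM_mem V xLS) hw0
    have hpyth : ‖xLS‖ ^ 2 = ‖projCLM V xLS‖ ^ 2 + ‖xLS - projCLM V xLS‖ ^ 2 := by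
      have hsum : projCLM V xLS + (xLS - projCLM V xLS) = xLS := by abel
      calc ‖xLS‖ ^ 2 = ‖projCLM V xLS + (xLS - projCLM V xLS)‖ ^ 2 := by rw [hsum]
        _ = _ := by rw [norm_add_sq_real, hiz]; ring
    have hsq : ‖xLS‖ ^ 2 ≤ ‖projCLM V xLS‖ ^ 2 :=
      pow_le_pow_left₀ (norm_nonneg _) hle 2
    have hw0sq : ‖xLS - projCLM V xLS‖ ^ 2 ≤ 0 := by linarith
    have hw0z : ‖xLS - projCLM V xLS‖ = 0 := by
      have h12 : ‖xLS - projCLM V xLS‖ ^ 2 = 0 :=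
        le_antisymm hw0sq (by positivity)
      exact (pow_eq_zero_iff two_ne_zero).1 h12
    have : xLS = projCLM V xLS := by
      have := norm_eq_zero.1 hw0z
      rw [sub_eq_zero] at this
      exact this
    rw [this]
    exact projCLM_mem V xLS
  -- b - A xLS is the projection of b on ker Aᵀ
  have hkerproj : projCLM (LinearMap.ker (Matrix.toEuclideanLin Aᵀ)) b = b - mulE A xLS := by
    have hmemker : b - mulE A xLS ∈ LinearMap.ker (Matrix.toEuclideanLin Aᵀ) := by
      have hz : ⟪mulE Aᵀ (b - mulE A xLS), mulE Aᵀ (b - mulE A xLS)⟫ = 0 := by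
        rw [mulE_adj]
        exact horth _
      have := inner_self_eq_zero.1 hz
      rw [mulE_coe] at this
      exact this
    have hinner : ∀ w ∈ LinearMap.ker (Matrix.toEuclideanLin Aᵀ),
        ⟪b - (b - mulE A xLS), w⟫ = 0 := by
      intro w hw
      have h4 : ⟪mulE Aᵀ w, xLS⟫ = ⟪w, mulE A xLS⟫ := mulE_adj A xLS w
      have h5 : mulE Aᵀ w = 0 := by rw [mulE_coe]; exact hw
      rw [h5] at h4
      simp only [inner_zero_left] at h4
      have : b - (b - mulE A xLS) = mulE A xLS := by abel
      rw [this, real_inner_comm]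
      exact h4.symm
    exact Submodule.eq_starProjection_of_mem_of_inner_eq_zero hmemker hinner
  -- conclude
  have hRAxLS : mulE R (mulE A xLS) = xLS - Ttil xLS := by
    have h6 := hone xLS
    have h7 : Ttil xLS = mulE T xLS := by
      rw [hTtil]
      show mulE T (projCLM V xLS) = _
      rw [projCLM_of_mem hxLSV]
    rw [h7]
    exact (eq_sub_of_add_eq' h6)
  have hinvRA : Ring.inverse (1 - Ttil) (mulE R (mulE A xLS)) = xLS :=
    inv_oneSub_apply Ttil h3 _ _ hRAxLS.symm
  have hsplit : mulE R b = mulE R (mulE A xLS) +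
      mulE R (projCLM (LinearMap.ker (Matrix.toEuclideanLin Aᵀ)) b) := by
    rw [hkerproj, ← map_add]
    congr 1
    abel
  rw [hsplit, map_add, hinvRA, hΔ]
end

section
/- Let Q(x) = Tx + Rb with T, R satisfying T + RA = I, range(R) ⊆ range(Aᵀ), ‖T P_{range(Aᵀ)}‖ < 1, and let {C_k}_{k≥0} be box projections with V*_k := Im(C_k) ∩ (Δ + LSS(A;b)) ≠ ∅ for all k and the nesting property: for every ℓ there is k(ℓ) ≥ ℓ with Im(C_{k+1}) ⊆ Im(C_ℓ) for all k ≥ k(ℓ). Then the family T_k := C_k ∘ Q has nonempty common fixed point set F, and any sequence x^{k+1} = C_{k+1}(Q(x^k)) satisfies: for each ℓ there is k(ℓ) with ‖C_{k+1}(Q(x^k)) − z‖ ≤ ‖C_ℓ(Q(x^k)) − z‖ for all z ∈ F and k ≥ k(ℓ). -/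
open Matrix

set_option maxHeartbeats 1000000

lemma clamp_sq_aux {a b a' b' t c : ℝ} (haa' : a ≤ a') (hb'b : b' ≤ b)
    (hc1 : a' ≤ c) (hc2 : c ≤ b') :
    ((if t < a' then a' else if b' < t then b' else t) - c)^2 ≤
    ((if t < a then a else if b < t then b else t) - c)^2 := by
  split_ifs <;> nlinarith

lemma norm_le_of_sq_aux {n : ℕ} (x y : EuclideanSpace ℝ (Fin n))
    (h : ∀ i, (x i)^2 ≤ (y i)^2) : ‖x‖ ≤ ‖y‖ := by
  rw [EuclideanSpace.norm_eq, EuclideanSpace.norm_eq]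
  apply Real.sqrt_le_sqrt
  apply Finset.sum_le_sum
  intro i _
  simpa [Real.norm_eq_abs, sq_abs] using h i

lemma ker_adj_aux {m n : ℕ} (f : EuclideanSpace ℝ (Fin n) →ₗ[ℝ] EuclideanSpace ℝ (Fin m)) :
    LinearMap.ker (LinearMap.adjoint f) = (LinearMap.range f)ᗮ := by
  ext x
  simp only [LinearMap.mem_ker, Submodule.mem_orthogonal]
  constructor
  · rintro h u ⟨y, rfl⟩
    rw [real_inner_comm, ← LinearMap.adjoint_inner_left, h, inner_zero_left]
  · intro h
    have h2 : (inner ℝ (LinearMap.adjoint f x) (LinearMap.adjoint f x) : ℝ) = 0 := by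
      rw [LinearMap.adjoint_inner_left, real_inner_comm]
      exact h _ ⟨_, rfl⟩
    exact inner_self_eq_zero.mp h2

lemma oneSub_facts_aux {Rng : Type*} [NormedRing Rng] [CompleteSpace Rng] (t : Rng)
    (h : ‖t‖ < 1) :
    (1 - t) * Ring.inverse (1 - t) = 1 ∧ Ring.inverse (1 - t) * (1 - t) = 1 := by
  have huval : ((Units.oneSub t h : Rngˣ) : Rng) = 1 - t := rfl
  have hinv : Ring.inverse (1 - t) = ((Units.oneSub t h)⁻¹ : Rngˣ) := by
    rw [← huval, Ring.inverse_unit]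
  rw [hinv, ← huval]
  exact ⟨(Units.oneSub t h).mul_inv, (Units.oneSub t h).inv_mul⟩

/-- For `Q(x) = Tx + Rb` with the three matrix properties, and box projections `C_k`
whose images satisfy `V*_k = Im(C_k) ∩ (Δ + LSS(A;b)) ≠ ∅` and the eventual nesting
condition, the family `T_k = C_k ∘ Q` has nonempty common fixed point set `F`, and any
sequence `x^{k+1} = C_{k+1}(Q(x^k))` satisfies Condition 1: for each `ℓ` there is `k(ℓ)`
with `‖C_{k+1}(Q(x^k)) − z‖ ≤ ‖C_ℓ(Q(x^k)) − z‖` for all `z ∈ F` and `k ≥ k(ℓ)`. -/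
theorem FCA_hypotheses_satisfied (m n : ℕ)
    (A : Matrix (Fin m) (Fin n) ℝ) (bvec : EuclideanSpace ℝ (Fin m))
    (T : Matrix (Fin n) (Fin n) ℝ)
    (R : Matrix (Fin n) (Fin m) ℝ)
    (h1 : T + R * A = 1)
    (h2 : ∀ y : EuclideanSpace ℝ (Fin m),
      mulE R y ∈ LinearMap.range (Matrix.toEuclideanLin Aᵀ))
    (Ttil : EuclideanSpace ℝ (Fin n) →L[ℝ] EuclideanSpace ℝ (Fin n))
    (hTtil : Ttil = (mulE T).comp (projCLM (LinearMap.range (Matrix.toEuclideanLin Aᵀ))))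
    (h3 : ‖Ttil‖ < 1)
    (Q : EuclideanSpace ℝ (Fin n) → EuclideanSpace ℝ (Fin n))
    (hQ : ∀ x, Q x = mulE T x + mulE R bvec)
    (LSS : Set (EuclideanSpace ℝ (Fin n)))
    (hLSS : LSS = {x | ∀ z, ‖mulE A x - bvec‖ ≤ ‖mulE A z - bvec‖})
    (Δ : EuclideanSpace ℝ (Fin n))
    (hΔ : Δ = Ring.inverse (1 - Ttil)
      (mulE R (projCLM (LinearMap.ker (Matrix.toEuclideanLin Aᵀ)) bvec)))
    (a b : ℕ → Fin n → ℝ) (hab : ∀ k i, a k i ≤ b k i)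
    (C : ℕ → EuclideanSpace ℝ (Fin n) → EuclideanSpace ℝ (Fin n))
    (hC : ∀ k x i, C k x i =
      if x i < a k i then a k i else if b k i < x i then b k i else x i)
    (Box : ℕ → Set (EuclideanSpace ℝ (Fin n)))
    (hBox : ∀ k, Box k = {z | ∀ i, a k i ≤ z i ∧ z i ≤ b k i})
    (hVne : ∀ k, ({z ∈ Box k | z - Δ ∈ LSS}).Nonempty)
    (hnest : ∀ ℓ : ℕ, ∃ kℓ ≥ ℓ, ∀ k ≥ kℓ, Box (k + 1) ⊆ Box ℓ)
    (F : Set (EuclideanSpace ℝ (Fin n)))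
    (hF : F = {z | ∀ k, C k (Q z) = z}) :
    F.Nonempty ∧
    ∀ x : ℕ → EuclideanSpace ℝ (Fin n), (∀ k, x (k + 1) = C (k + 1) (Q (x k))) →
      ∀ ℓ : ℕ, ∃ kℓ : ℕ, ∀ z ∈ F, ∀ k ≥ kℓ,
        ‖C (k + 1) (Q (x k)) - z‖ ≤ ‖C ℓ (Q (x k)) - z‖ := by
  classical
  -- basic facts about the clamp maps and boxes
  have hCmem : ∀ k x, C k x ∈ Box k := by
    intro k x
    rw [hBox]
    intro i
    rw [hC]
    split_ifs with g1 g2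
    · exact ⟨le_refl _, hab k i⟩
    · exact ⟨hab k i, le_refl _⟩
    · exact ⟨not_lt.mp g1, not_lt.mp g2⟩
  have hCfix : ∀ k z, z ∈ Box k → C k z = z := by
    intro k z hz
    rw [hBox] at hz
    ext i
    rw [hC]
    rcases hz i with ⟨ha1, hb1⟩
    split_ifs with g1 g2
    · linarith
    · linarith
    · rfl
  have hFbox : ∀ z ∈ F, ∀ k, z ∈ Box k := by
    intro z hz k
    rw [hF] at hz
    rw [← hz k]
    exact hCmem k (Q z)
  -- per-coordinate interval containment from box containment
  have hint : ∀ ℓ k, Box k ⊆ Box ℓ → (Box k).Nonempty →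
      ∀ i, a ℓ i ≤ a k i ∧ b k i ≤ b ℓ i := by
    intro ℓ k hsub ⟨w, hw⟩ i
    rw [hBox] at hw
    have hval : ∀ (t : ℝ) (j : Fin n),
        ((WithLp.equiv 2 (Fin n → ℝ)).symm
          (Function.update (WithLp.equiv 2 (Fin n → ℝ) w) i t)) j
        = if j = i then t else w j := by
      intro t j
      show Function.update (WithLp.equiv 2 (Fin n → ℝ) w) i t j = _
      rw [Function.update_apply]
      rfl
    have key : ∀ t : ℝ, a k i ≤ t → t ≤ b k i → a ℓ i ≤ t ∧ t ≤ b ℓ i := by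
      intro t hta htb
      have hw1 : (WithLp.equiv 2 (Fin n → ℝ)).symm
          (Function.update (WithLp.equiv 2 (Fin n → ℝ) w) i t) ∈ Box k := by
        rw [hBox]
        intro j
        rw [hval]
        split_ifs with hji
        · subst hji; exact ⟨hta, htb⟩
        · exact hw j
      have hw2 := hsub hw1
      rw [hBox] at hw2
      have := hw2 i
      rw [hval, if_pos rfl] at this
      exact this
    constructor
    · exact (key (a k i) (le_refl _) (hab k i)).1
    · exact (key (b k i) (hab k i) (le_refl _)).2
  -- Part 2 (Condition 1)
  have part2 : ∀ x : ℕ → EuclideanSpace ℝ (Fin n),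
      (∀ k, x (k + 1) = C (k + 1) (Q (x k))) →
      ∀ ℓ : ℕ, ∃ kℓ : ℕ, ∀ z ∈ F, ∀ k ≥ kℓ,
        ‖C (k + 1) (Q (x k)) - z‖ ≤ ‖C ℓ (Q (x k)) - z‖ := by
    intro x _ ℓ
    obtain ⟨kℓ, hkℓge, hsub⟩ := hnest ℓ
    refine ⟨kℓ, fun z hz k hk => ?_⟩
    have hzk1 : z ∈ Box (k+1) := hFbox z hz (k+1)
    have hintv := hint ℓ (k+1) (hsub k hk) ⟨z, hzk1⟩
    apply norm_le_of_sq_aux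
    intro i
    have e1 : (C (k+1) (Q (x k)) - z) i = C (k+1) (Q (x k)) i - z i := rfl
    have e2 : (C ℓ (Q (x k)) - z) i = C ℓ (Q (x k)) i - z i := rfl
    rw [e1, e2, hC, hC]
    rw [hBox] at hzk1
    exact clamp_sq_aux (hintv i).1 (hintv i).2 (hzk1 i).1 (hzk1 i).2
  -- matrix algebra
  have hTRA : ∀ v : EuclideanSpace ℝ (Fin n), mulE T v + mulE R (mulE A v) = v := by
    intro v
    have h0 : mulE (T + R * A) v = mulE (1 : Matrix (Fin n) (Fin n) ℝ) v := by rw [h1]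
    rwa [show mulE (T + R*A) v = mulE T v + mulE (R*A) v by simp [mulE, map_add],
      show mulE (R*A) v = mulE R (mulE A v) by simp [mulE, Matrix.toEuclideanLin_apply],
      show mulE (1 : Matrix (Fin n) (Fin n) ℝ) v = v by
        simp [mulE, Matrix.toEuclideanLin_apply]] at h0
  set S : Submodule ℝ (EuclideanSpace ℝ (Fin n)) :=
    LinearMap.range (Matrix.toEuclideanLin Aᵀ) with hSdef
  have hprojS : ∀ s ∈ S, projCLM S s = s := by
    intro s hs
    have h : projCLM S s = (Submodule.orthogonalProjection S s : EuclideanSpace ℝ (Fin n)) := rfl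
    rw [h]
    exact Submodule.starProjection_eq_self_iff.mpr hs
  have hTt : ∀ s ∈ S, Ttil s = mulE T s := by
    intro s hs
    rw [hTtil]
    show mulE T (projCLM S s) = mulE T s
    rw [hprojS s hs]
  have honeSub : ∀ s ∈ S, (1 - Ttil) s = mulE R (mulE A s) := by
    intro s hs
    have h0 := hTRA s
    show s - Ttil s = mulE R (mulE A s)
    rw [hTt s hs, eq_comm, eq_sub_iff_add_eq, add_comm]
    exact h0
  have hSmap : ∀ s ∈ S, (1 - Ttil) s ∈ S := by
    intro s hs
    rw [honeSub s hs]
    exact h2 _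
  obtain ⟨hmulinv, hinvmul⟩ := oneSub_facts_aux Ttil h3
  have happly : ∀ v, (1 - Ttil) (Ring.inverse (1 - Ttil) v) = v := by
    intro v
    have := congrArg (fun f => f v) hmulinv
    simpa [ContinuousLinearMap.mul_apply] using this
  have hinj : Function.Injective (1 - Ttil : _ →L[ℝ] _) := by
    intro p q hpq
    have h5 := congrArg (fun f => f p) hinvmul
    have h6 := congrArg (fun f => f q) hinvmul
    simp only [ContinuousLinearMap.mul_apply, ContinuousLinearMap.one_apply] at h5 h6
    rw [← h5, ← h6, hpq]
  set vvec : EuclideanSpace ℝ (Fin n) :=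
    mulE R (projCLM (LinearMap.ker (Matrix.toEuclideanLin Aᵀ)) bvec) with hvvec
  have hvS : vvec ∈ S := h2 _
  have hΔv : (1 - Ttil) Δ = vvec := by rw [hΔ]; exact happly _
  have hΔS : Δ ∈ S := by
    let f : EuclideanSpace ℝ (Fin n) →ₗ[ℝ] EuclideanSpace ℝ (Fin n) :=
      ((1 - Ttil : EuclideanSpace ℝ (Fin n) →L[ℝ] EuclideanSpace ℝ (Fin n)) : _ →ₗ[ℝ] _)
    have hfS : ∀ s ∈ S, f s ∈ S := hSmap
    let g : S →ₗ[ℝ] S := LinearMap.restrict f hfS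
    have ginj : Function.Injective g := by
      intro p q h
      have h2' : f p = f q := by
        have := congrArg (Subtype.val) h
        simpa [g, LinearMap.restrict_apply] using this
      exact Subtype.ext (hinj h2')
    obtain ⟨s, hs⟩ := LinearMap.injective_iff_surjective.mp ginj ⟨vvec, hvS⟩
    have hs2 : (1 - Ttil) (s : EuclideanSpace ℝ (Fin n)) = vvec := by
      have := congrArg Subtype.val hs
      simpa [g, f, LinearMap.restrict_apply] using this
    have h3' : Δ = (s : EuclideanSpace ℝ (Fin n)) := hinj (by rw [hΔv, hs2])
    rw [h3']
    exact s.2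
  -- least squares structure
  set K : Submodule ℝ (EuclideanSpace ℝ (Fin m)) :=
    LinearMap.range (Matrix.toEuclideanLin A) with hK
  set pvec : EuclideanSpace ℝ (Fin m) :=
    (Submodule.orthogonalProjection K bvec : EuclideanSpace ℝ (Fin m)) with hp
  have hpK : pvec ∈ K := (Submodule.orthogonalProjection K bvec).2
  have hbp : bvec - pvec ∈ Kᗮ := Submodule.sub_starProjection_mem_orthogonal bvec
  have hpyth : ∀ w ∈ K, ‖w - bvec‖^2 = ‖w - pvec‖^2 + ‖pvec - bvec‖^2 := by
    intro w hw
    have horth : (inner ℝ (w - pvec) (pvec - bvec) : ℝ) = 0 := by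
      have hm1 : w - pvec ∈ K := K.sub_mem hw hpK
      have hm2 : pvec - bvec ∈ Kᗮ := by
        have := Kᗮ.neg_mem hbp
        simpa [neg_sub] using this
      exact Submodule.inner_right_of_mem_orthogonal hm1 hm2
    have hsum : w - bvec = (w - pvec) + (pvec - bvec) := by abel
    rw [hsum, norm_add_sq_real, horth]
    ring
  obtain ⟨u₀, hu₀⟩ : ∃ u₀, Matrix.toEuclideanLin A u₀ = pvec := hpK
  have hmemK : ∀ z, mulE A z ∈ K := fun z => ⟨z, rfl⟩
  have hAu₀ : mulE A u₀ = pvec := hu₀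
  have hmin : ∀ z, ‖mulE A u₀ - bvec‖ ≤ ‖mulE A z - bvec‖ := by
    intro z
    have hq := hpyth (mulE A z) (hmemK z)
    rw [hAu₀]
    refine le_of_pow_le_pow_left₀ two_ne_zero (norm_nonneg _) ?_
    nlinarith [sq_nonneg ‖mulE A z - pvec‖]
  have hALSS : ∀ w ∈ LSS, mulE A w = pvec := by
    intro w hw
    rw [hLSS] at hw
    have e3 : ‖mulE A w - bvec‖ = ‖pvec - bvec‖ := by
      have e1 : ‖mulE A w - bvec‖ ≤ ‖mulE A u₀ - bvec‖ := hw u₀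
      have e2 := hmin w
      rw [hAu₀] at e1 e2
      exact le_antisymm e1 e2
    have hq := hpyth (mulE A w) (hmemK w)
    have e4 : ‖mulE A w - bvec‖^2 = ‖pvec - bvec‖^2 := by rw [e3]
    have h4 : ‖mulE A w - pvec‖^2 = 0 := le_antisymm (by linarith) (sq_nonneg _)
    have h5 : mulE A w - pvec = 0 :=
      norm_eq_zero.mp ((pow_eq_zero_iff (two_ne_zero)).mp h4)
    rw [sub_eq_zero] at h5
    exact h5
  -- the projection onto ker Aᵀ
  have hAT : Matrix.toEuclideanLin Aᵀ = LinearMap.adjoint (Matrix.toEuclideanLin A) := by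
    rw [← Matrix.conjTranspose_eq_transpose_of_trivial, Matrix.toEuclideanLin_conjTranspose_eq_adjoint]
  have hkerT : LinearMap.ker (Matrix.toEuclideanLin Aᵀ) = Kᗮ := by
    rw [hAT, ker_adj_aux, hK]
  have hprojker : projCLM (LinearMap.ker (Matrix.toEuclideanLin Aᵀ)) bvec = bvec - pvec := by
    rw [hkerT]
    show ((Submodule.orthogonalProjection Kᗮ bvec : EuclideanSpace ℝ (Fin m))) = bvec - pvec
    exact Submodule.starProjection_orthogonal_val bvec
  have hvvec2 : vvec = mulE R bvec - mulE R pvec := by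
    rw [hvvec, hprojker, map_sub]
  -- fixed point property of Q on Δ + LSS
  have hQfix : ∀ w, w - Δ ∈ LSS → Q w = w := by
    intro w hw
    have hAw := hALSS _ hw
    have h0 := hTRA (w - Δ)
    rw [hAw] at h0
    rw [hQ]
    have hsplit : mulE T w = mulE T (w - Δ) + mulE T Δ := by
      rw [← map_add]
      congr 1
      abel
    have h5 : mulE T Δ = Δ - vvec := by
      have h6 : Δ - Ttil Δ = vvec := by
        have := hΔv
        simpa [ContinuousLinearMap.sub_apply, ContinuousLinearMap.one_apply] using this
      rw [← hTt Δ hΔS, eq_sub_iff_add_eq, ← h6]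
      abel
    have h7 : mulE T (w - Δ) = (w - Δ) - mulE R pvec := by
      rw [eq_sub_iff_add_eq]
      exact h0
    rw [hsplit, h7, h5, hvvec2]
    abel
  -- closedness
  have hLSSc : IsClosed LSS := by
    rw [hLSS]
    have hrw : {x : EuclideanSpace ℝ (Fin n) | ∀ z, ‖mulE A x - bvec‖ ≤ ‖mulE A z - bvec‖} =
        ⋂ z, {x | ‖mulE A x - bvec‖ ≤ ‖mulE A z - bvec‖} := by
      ext x; simp [Set.mem_iInter]
    rw [hrw]
    refine isClosed_iInter fun z => isClosed_le ?_ continuous_const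
    exact ((mulE A).continuous.sub continuous_const).norm
  have hBoxc : ∀ k, IsClosed (Box k) := by
    intro k
    rw [hBox]
    have hrw : {z : EuclideanSpace ℝ (Fin n) | ∀ i, a k i ≤ z i ∧ z i ≤ b k i} =
        ⋂ i, ({z : EuclideanSpace ℝ (Fin n) | a k i ≤ z i} ∩ {z | z i ≤ b k i}) := by
      ext z; simp [Set.mem_iInter, forall_and]
    rw [hrw]
    refine isClosed_iInter fun i => IsClosed.inter ?_ ?_
    · exact isClosed_le continuous_const (EuclideanSpace.proj (𝕜 := ℝ) i).continuous
    · exact isClosed_le (EuclideanSpace.proj (𝕜 := ℝ) i).continuous continuous_const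
  -- boundedness of Box 0
  have hbdd : Bornology.IsBounded (Box 0) := by
    rw [hBox]
    apply Bornology.IsBounded.subset (Metric.isBounded_closedBall
      (x := (0 : EuclideanSpace ℝ (Fin n)))
      (r := Real.sqrt (∑ i, max ((a 0 i)^2) ((b 0 i)^2))))
    intro z hz
    rw [Metric.mem_closedBall, dist_zero_right, EuclideanSpace.norm_eq]
    apply Real.sqrt_le_sqrt
    apply Finset.sum_le_sum
    intro i _
    rcases hz i with ⟨ha1, hb1⟩
    rw [Real.norm_eq_abs, sq_abs]
    rcases le_or_gt 0 (z i) with h | h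
    · exact le_max_of_le_right (by nlinarith)
    · exact le_max_of_le_left (by nlinarith)
  -- the convergent subsequence
  obtain ⟨K0, hK0ge, hK0⟩ := hnest 0
  set y : ℕ → EuclideanSpace ℝ (Fin n) := fun j => (hVne (j + K0 + 1)).choose with hy
  have hyBox : ∀ j, y j ∈ Box (j + K0 + 1) := fun j => (hVne _).choose_spec.1
  have hyLSS : ∀ j, y j - Δ ∈ LSS := fun j => (hVne _).choose_spec.2
  have hyBox0 : ∀ j, y j ∈ Box 0 := fun j => hK0 (j + K0) (Nat.le_add_left _ _) (hyBox j)
  obtain ⟨zlim, hzlimcl, φ, hφ, htends⟩ := tendsto_subseq_of_bounded hbdd hyBox0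
  have hzLSS : zlim - Δ ∈ LSS := by
    have htends2 : Filter.Tendsto (fun j => y (φ j) - Δ) Filter.atTop (nhds (zlim - Δ)) :=
      htends.sub tendsto_const_nhds
    exact hLSSc.mem_of_tendsto htends2 (Filter.Eventually.of_forall fun j => hyLSS (φ j))
  have hzBox : ∀ ℓ, zlim ∈ Box ℓ := by
    intro ℓ
    obtain ⟨kℓ, hkℓge, hsub⟩ := hnest ℓ
    apply (hBoxc ℓ).mem_of_tendsto htends
    filter_upwards [Filter.eventually_ge_atTop kℓ] with j hj
    have hle : kℓ ≤ φ j + K0 := le_trans (le_trans hj hφ.le_apply) (Nat.le_add_right _ _)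
    exact hsub (φ j + K0) hle (hyBox (φ j))
  refine ⟨⟨zlim, ?_⟩, part2⟩
  rw [hF]
  intro k
  rw [hQfix zlim hzLSS]
  exact hCfix k zlim (hzBox k)
end
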